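/- Let ζ ∈ 𝒞. The following are equivalent: (i) every efficient solution (x_I, x_C) ∈ X_MO with c⁰_I·x_I + c⁰_C·x_C = z(ζ) and C_I^{1:ℓ} x_I + C_C^{1:ℓ} x_C ≤ ζ componentwise satisfies C_I^{1:ℓ} x_I + C_C^{1:ℓ} x_C = ζ; (ii) ∇_d z(ζ) > 0 (a value in ℝ ∪ {+∞}) for every d ∈ ℝ^ℓ with d ≤ 0 componentwise and d ≠ 0. -/

import Mathlib

open Matrix Filter Topology Set

noncomputable section

/-- Primal feasibility for the restricted LP with data `(ζ, β)`. -/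
def LPfeas {l m nc : ℕ} (CC : Matrix (Fin l) (Fin nc) ℝ) (AC : Matrix (Fin m) (Fin nc) ℝ)
    (ζ : Fin l → ℝ) (β : Fin m → ℝ) (x : Fin nc → ℝ) : Prop :=
  (∀ j, 0 ≤ x j) ∧ CC.mulVec x ≤ ζ ∧ AC.mulVec x = β

/-- The restricted LP value function, taking the value `+∞` when infeasible. -/
def zLP {l m nc : ℕ} (cC : Fin nc → ℝ) (CC : Matrix (Fin l) (Fin nc) ℝ)
    (AC : Matrix (Fin m) (Fin nc) ℝ) (ζ : Fin l → ℝ) (β : Fin m → ℝ) : EReal :=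
  sInf {y : EReal | ∃ x : Fin nc → ℝ, LPfeas CC AC ζ β x ∧ y = ((cC ⬝ᵥ x : ℝ) : EReal)}

/-- The finite domain (feasibility region) of the restricted LP value function. -/
def CLP {l m nc : ℕ} (CC : Matrix (Fin l) (Fin nc) ℝ) (AC : Matrix (Fin m) (Fin nc) ℝ)
    (β : Fin m → ℝ) : Set (Fin l → ℝ) :=
  {ζ | ∃ x : Fin nc → ℝ, LPfeas CC AC ζ β x}

/-- The dual feasible region `P_D`. -/
def PD {l m nc : ℕ} (cC : Fin nc → ℝ) (CC : Matrix (Fin l) (Fin nc) ℝ)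
    (AC : Matrix (Fin m) (Fin nc) ℝ) : Set ((Fin l → ℝ) × (Fin m → ℝ)) :=
  {uv | uv.1 ≤ 0 ∧ CC.transpose.mulVec uv.1 + AC.transpose.mulVec uv.2 ≤ cC}

/-- Projection of the optimal face of the dual LP onto the `u`-coordinates. -/
def projOPT {l m nc : ℕ} (cC : Fin nc → ℝ) (CC : Matrix (Fin l) (Fin nc) ℝ)
    (AC : Matrix (Fin m) (Fin nc) ℝ) (ζ : Fin l → ℝ) (β : Fin m → ℝ) : Set (Fin l → ℝ) :=
  {u | ∃ v : Fin m → ℝ, (u, v) ∈ PD cC CC AC ∧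
    ((ζ ⬝ᵥ u + β ⬝ᵥ v : ℝ) : EReal) = zLP cC CC AC ζ β}

/-- A real vector with natural-number entries. -/
def IsNatVec {r : ℕ} (x : Fin r → ℝ) : Prop := ∀ i, ∃ k : ℕ, x i = (k : ℝ)

/-- The MILP feasible region `X_MO`. -/
def XMO {m nc r : ℕ} (AI : Matrix (Fin m) (Fin r) ℝ) (AC : Matrix (Fin m) (Fin nc) ℝ)
    (b : Fin m → ℝ) : Set ((Fin r → ℝ) × (Fin nc → ℝ)) :=
  {p | IsNatVec p.1 ∧ (∀ j, 0 ≤ p.2 j) ∧ AI.mulVec p.1 + AC.mulVec p.2 = b}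

/-- The restricted feasible region `S(ζ)`. -/
def Sreg {l m nc r : ℕ} (AI : Matrix (Fin m) (Fin r) ℝ) (AC : Matrix (Fin m) (Fin nc) ℝ)
    (b : Fin m → ℝ) (CI : Matrix (Fin l) (Fin r) ℝ) (CC : Matrix (Fin l) (Fin nc) ℝ)
    (ζ : Fin l → ℝ) : Set ((Fin r → ℝ) × (Fin nc → ℝ)) :=
  {p ∈ XMO AI AC b | CI.mulVec p.1 + CC.mulVec p.2 ≤ ζ}

/-- The restricted value function `z`, taking the value `+∞` when `S(ζ) = ∅`. -/
def zRVF {l m nc r : ℕ} (cI : Fin r → ℝ) (cC : Fin nc → ℝ) (AI : Matrix (Fin m) (Fin r) ℝ)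
    (AC : Matrix (Fin m) (Fin nc) ℝ) (b : Fin m → ℝ) (CI : Matrix (Fin l) (Fin r) ℝ)
    (CC : Matrix (Fin l) (Fin nc) ℝ) (ζ : Fin l → ℝ) : EReal :=
  sInf {y : EReal | ∃ p ∈ Sreg AI AC b CI CC ζ, y = ((cI ⬝ᵥ p.1 + cC ⬝ᵥ p.2 : ℝ) : EReal)}

/-- The finite domain `𝒞` of the restricted value function. -/
def Cdom {l m nc r : ℕ} (AI : Matrix (Fin m) (Fin r) ℝ) (AC : Matrix (Fin m) (Fin nc) ℝ)
    (b : Fin m → ℝ) (CI : Matrix (Fin l) (Fin r) ℝ) (CC : Matrix (Fin l) (Fin nc) ℝ) :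
    Set (Fin l → ℝ) :=
  {ζ | (Sreg AI AC b CI CC ζ).Nonempty}

/-- The set `S_I` of integer parts of feasible solutions. -/
def SI {m nc r : ℕ} (AI : Matrix (Fin m) (Fin r) ℝ) (AC : Matrix (Fin m) (Fin nc) ℝ)
    (b : Fin m → ℝ) : Set (Fin r → ℝ) :=
  {xI | ∃ xC : Fin nc → ℝ, (xI, xC) ∈ XMO AI AC b}

/-- The bounding function `z̄(ζ; x̂_I)`. -/
def zbar {l m nc r : ℕ} (cI : Fin r → ℝ) (cC : Fin nc → ℝ) (AI : Matrix (Fin m) (Fin r) ℝ)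
    (AC : Matrix (Fin m) (Fin nc) ℝ) (b : Fin m → ℝ) (CI : Matrix (Fin l) (Fin r) ℝ)
    (CC : Matrix (Fin l) (Fin nc) ℝ) (ζ : Fin l → ℝ) (xI : Fin r → ℝ) : EReal :=
  ((cI ⬝ᵥ xI : ℝ) : EReal) + zLP cC CC AC (ζ - CI.mulVec xI) (b - AI.mulVec xI)

/-- The set `S*_I(ζ)` of integer parts whose bounding function is active at `ζ`. -/
def SstarI {l m nc r : ℕ} (cI : Fin r → ℝ) (cC : Fin nc → ℝ) (AI : Matrix (Fin m) (Fin r) ℝ)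
    (AC : Matrix (Fin m) (Fin nc) ℝ) (b : Fin m → ℝ) (CI : Matrix (Fin l) (Fin r) ℝ)
    (CC : Matrix (Fin l) (Fin nc) ℝ) (ζ : Fin l → ℝ) : Set (Fin r → ℝ) :=
  {xI ∈ SI AI AC b | zbar cI cC AI AC b CI CC ζ xI = zRVF cI cC AI AC b CI CC ζ}

/-- A description of the restricted value function. -/
def IsDescription {l m nc r : ℕ} (cI : Fin r → ℝ) (cC : Fin nc → ℝ)
    (AI : Matrix (Fin m) (Fin r) ℝ) (AC : Matrix (Fin m) (Fin nc) ℝ) (b : Fin m → ℝ)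
    (CI : Matrix (Fin l) (Fin r) ℝ) (CC : Matrix (Fin l) (Fin nc) ℝ)
    (S : Set (Fin r → ℝ)) : Prop :=
  S ⊆ SI AI AC b ∧
  ∀ ζ ∈ Cdom AI AC b CI CC, ∃ xI ∈ S, ∃ xC : Fin nc → ℝ,
    (xI, xC) ∈ Sreg AI AC b CI CC ζ ∧
    ((cI ⬝ᵥ xI + cC ⬝ᵥ xC : ℝ) : EReal) = zRVF cI cC AI AC b CI CC ζ

/-- A minimal description of the restricted value function. -/
def IsMinimalDescription {l m nc r : ℕ} (cI : Fin r → ℝ) (cC : Fin nc → ℝ)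
    (AI : Matrix (Fin m) (Fin r) ℝ) (AC : Matrix (Fin m) (Fin nc) ℝ) (b : Fin m → ℝ)
    (CI : Matrix (Fin l) (Fin r) ℝ) (CC : Matrix (Fin l) (Fin nc) ℝ)
    (S : Set (Fin r → ℝ)) : Prop :=
  IsDescription cI cC AI AC b CI CC S ∧
  ∀ S' : Set (Fin r → ℝ), S' ⊂ S → ¬ IsDescription cI cC AI AC b CI CC S'

/-- One-sided directional derivative (as a limit in `EReal`). -/
def HasDirDeriv {l : ℕ} (f : (Fin l → ℝ) → EReal) (x d : Fin l → ℝ) (L : EReal) : Prop :=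
  Tendsto (fun t : ℝ => ((t⁻¹ : ℝ) : EReal) * (f (x + t • d) - f x)) (𝓝[>] (0 : ℝ)) (𝓝 L)

/-- The criterion-space vector `Cx ∈ ℝ^{ℓ+1}` of a feasible point. -/
def CritVec {l nc r : ℕ} (cI : Fin r → ℝ) (cC : Fin nc → ℝ) (CI : Matrix (Fin l) (Fin r) ℝ)
    (CC : Matrix (Fin l) (Fin nc) ℝ) (p : (Fin r → ℝ) × (Fin nc → ℝ)) : ℝ × (Fin l → ℝ) :=
  (cI ⬝ᵥ p.1 + cC ⬝ᵥ p.2, CI.mulVec p.1 + CC.mulVec p.2)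

/-- Efficient solutions of the multiobjective MILP. -/
def IsEfficient {l m nc r : ℕ} (cI : Fin r → ℝ) (cC : Fin nc → ℝ)
    (AI : Matrix (Fin m) (Fin r) ℝ) (AC : Matrix (Fin m) (Fin nc) ℝ) (b : Fin m → ℝ)
    (CI : Matrix (Fin l) (Fin r) ℝ) (CC : Matrix (Fin l) (Fin nc) ℝ)
    (p : (Fin r → ℝ) × (Fin nc → ℝ)) : Prop :=
  p ∈ XMO AI AC b ∧ ¬ ∃ q ∈ XMO AI AC b,
    CritVec cI cC CI CC q ≤ CritVec cI cC CI CC p ∧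
    CritVec cI cC CI CC q ≠ CritVec cI cC CI CC p

/-- The upper approximation `z̄ᵏ` built from a set `Sk` of integer parts and bound `U`. -/
def zbark {l m nc r : ℕ} (cI : Fin r → ℝ) (cC : Fin nc → ℝ) (AI : Matrix (Fin m) (Fin r) ℝ)
    (AC : Matrix (Fin m) (Fin nc) ℝ) (b : Fin m → ℝ) (CI : Matrix (Fin l) (Fin r) ℝ)
    (CC : Matrix (Fin l) (Fin nc) ℝ) (Sk : Set (Fin r → ℝ)) (U : ℝ) (ζ : Fin l → ℝ) : EReal :=
  min (sInf {y : EReal | ∃ xI ∈ Sk, y = zbar cI cC AI AC b CI CC ζ xI}) (U : EReal)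


namespace Stmt13Aux

open Matrix Filter Topology Set

lemma continuous_dot {n : ℕ} (v : Fin n → ℝ) : Continuous fun x : Fin n → ℝ => v ⬝ᵥ x := by
  unfold dotProduct
  exact continuous_finset_sum _ fun i _ => continuous_const.mul (continuous_apply i)

lemma extremePoints_finite {E : Type*} [AddCommGroup E] [Module ℝ E]
    {ι : Type*} [Fintype ι] (f : ι → E →ₗ[ℝ] ℝ) (q : ι → ℝ) :
    (Set.extremePoints ℝ {x : E | ∀ i, f i x ≤ q i}).Finite := by
  classical
  set Q := {x : E | ∀ i, f i x ≤ q i} with hQ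
  have hinj : Set.InjOn (fun x => ({i | f i x = q i} : Set ι)) (Set.extremePoints ℝ Q) := by
    intro x hx y hy hxy
    by_contra hne
    have hxQ : ∀ i, f i x ≤ q i := hx.1
    have hyQ : ∀ i, f i y ≤ q i := hy.1
    have htight : ∀ i, f i x = q i ↔ f i y = q i := by
      intro i
      exact Set.ext_iff.1 hxy i
    obtain ⟨ε, hε, hεlt⟩ : ∃ ε > 0, ∀ i, f i x < q i → ε * |f i (x - y)| < q i - f i x := by
      classical
      set B := Finset.univ.filter (fun i => f i x < q i) with hBdef
      rcases B.eq_empty_or_nonempty with hB | hB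
      · refine ⟨1, one_pos, fun i hi => ?_⟩
        have hiB : i ∈ B := by rw [hBdef]; simp [hi]
        rw [hB] at hiB
        exact absurd hiB (Finset.notMem_empty i)
      · refine ⟨B.inf' hB (fun i => (q i - f i x) / (|f i (x - y)| + 1)), ?_, ?_⟩
        · rw [gt_iff_lt, Finset.lt_inf'_iff]
          intro i hi
          have : f i x < q i := by
            have := Finset.mem_filter.1 hi
            simpa using this.2
          exact div_pos (sub_pos.2 this) (by positivity)
        · intro i hi
          have hiB : i ∈ B := by rw [hBdef]; simp [hi]
          have h1 : B.inf' hB (fun i => (q i - f i x) / (|f i (x - y)| + 1)) ≤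
              (q i - f i x) / (|f i (x - y)| + 1) := Finset.inf'_le _ hiB
          have habs : (0:ℝ) ≤ |f i (x - y)| := abs_nonneg _
          calc B.inf' hB (fun i => (q i - f i x) / (|f i (x - y)| + 1)) * |f i (x - y)|
              ≤ (q i - f i x) / (|f i (x - y)| + 1) * |f i (x - y)| :=
                mul_le_mul_of_nonneg_right h1 habs
            _ < q i - f i x := by
                rw [div_mul_eq_mul_div, div_lt_iff₀ (by positivity)]
                nlinarith [sub_pos.2 hi]
    set u := x - y with hu
    have humem : ∀ (c : ℝ), |c| ≤ ε → x + c • u ∈ Q := by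
      intro c hc i
      by_cases hti : f i x = q i
      · have : f i y = q i := (htight i).1 hti
        have hfu : f i u = 0 := by
          rw [hu, map_sub, hti, this, sub_self]
        simp [map_add, _root_.map_smul, hfu, hti]
      · have hlt : f i x < q i := lt_of_le_of_ne (hxQ i) hti
        have : f i (x + c • u) = f i x + c * f i u := by
          rw [map_add, _root_.map_smul, smul_eq_mul]
        rw [this]
        have h2 : c * f i u ≤ ε * |f i u| := by
          calc c * f i u ≤ |c * f i u| := le_abs_self _
            _ = |c| * |f i u| := abs_mul _ _
            _ ≤ ε * |f i u| := mul_le_mul_of_nonneg_right hc (abs_nonneg _)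
        have := hεlt i hlt
        linarith
    have hz1 : x + ε • u ∈ Q := humem ε (by rw [abs_of_pos hε])
    have hz2 : x + (-ε) • u ∈ Q := humem (-ε) (by rw [abs_neg, abs_of_pos hε])
    have hseg : x ∈ openSegment ℝ (x + ε • u) (x + (-ε) • u) := by
      refine ⟨1/2, 1/2, by norm_num, by norm_num, by norm_num, ?_⟩
      module
    obtain ⟨hmemx, hext⟩ := mem_extremePoints.1 hx
    have heq1 : x + ε • u = x := (hext _ hz1 _ hz2 hseg).1
    have hu0 : ε • u = 0 := by
      have h' := heq1
      rwa [add_eq_left] at h'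
    have hu' : u = 0 := by
      rcases smul_eq_zero.1 hu0 with h | h
      · exact absurd h (ne_of_gt hε)
      · exact h
    have : x - y = 0 := by rw [← hu]; exact hu'
    exact hne (sub_eq_zero.1 this)
  exact Set.Finite.of_finite_image (Set.toFinite _) hinj

end Stmt13Aux
namespace Stmt13Aux

open Matrix Filter Topology Set

lemma dot_sum {n : ℕ} {α : Type*} (v : Fin n → ℝ) (s : Finset α) (f : α → Fin n → ℝ) :
    v ⬝ᵥ (∑ a ∈ s, f a) = ∑ a ∈ s, v ⬝ᵥ f a := by
  simp only [dotProduct, Finset.sum_apply, Finset.mul_sum]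
  exact Finset.sum_comm

lemma dot_smul' {n : ℕ} (v : Fin n → ℝ) (c : ℝ) (x : Fin n → ℝ) :
    v ⬝ᵥ (c • x) = c * (v ⬝ᵥ x) := by
  simp [dotProduct, Finset.mul_sum]
  ring_nf
  apply Finset.sum_congr rfl
  intro i _
  ring

lemma dot_add' {n : ℕ} (v : Fin n → ℝ) (x y : Fin n → ℝ) :
    v ⬝ᵥ (x + y) = v ⬝ᵥ x + v ⬝ᵥ y := dotProduct_add v x y

/-- The fundamental parametric-LP dichotomy along a ray. -/
lemma lp_dichotomy {l m nc : ℕ} (cC : Fin nc → ℝ) (AC : Matrix (Fin m) (Fin nc) ℝ)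
    (CC : Matrix (Fin l) (Fin nc) ℝ) (β : Fin m → ℝ) (γ : Fin l → ℝ) (d : Fin l → ℝ)
    (hd : d ≤ 0)
    (hbdd : Bornology.IsBounded {x : Fin nc → ℝ | (∀ j, 0 ≤ x j) ∧ AC.mulVec x = β}) :
    (∀ t ∈ Set.Ioc (0:ℝ) 1, ∀ x : Fin nc → ℝ,
        ¬ ((∀ j, 0 ≤ x j) ∧ AC.mulVec x = β ∧ CC.mulVec x ≤ γ + t • d)) ∨
    (∃ δ s φ0 : ℝ, 0 < δ ∧ δ ≤ 1 ∧
      (∀ t ∈ Set.Icc (0:ℝ) δ, ∃ x : Fin nc → ℝ,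
        ((∀ j, 0 ≤ x j) ∧ AC.mulVec x = β ∧ CC.mulVec x ≤ γ + t • d) ∧ cC ⬝ᵥ x = φ0 + s * t) ∧
      (∀ t ∈ Set.Icc (0:ℝ) 1, ∀ x : Fin nc → ℝ,
        ((∀ j, 0 ≤ x j) ∧ AC.mulVec x = β ∧ CC.mulVec x ≤ γ + t • d) → φ0 + s * t ≤ cC ⬝ᵥ x)) := by
  classical
  by_cases hex : ∃ t ∈ Set.Ioc (0:ℝ) 1, ∃ x : Fin nc → ℝ,
      (∀ j, 0 ≤ x j) ∧ AC.mulVec x = β ∧ CC.mulVec x ≤ γ + t • d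
  swap
  · left
    exact fun t ht x hx => hex ⟨t, ht, x, hx⟩
  right
  obtain ⟨t₀, ht₀, x₀, hx₀⟩ := hex
  set Q : Set ((Fin nc → ℝ) × ℝ) := {p | (∀ j, 0 ≤ p.1 j) ∧ AC.mulVec p.1 = β ∧
      CC.mulVec p.1 ≤ γ + p.2 • d ∧ 0 ≤ p.2 ∧ p.2 ≤ 1} with hQdef
  -- convexity
  have hQconv : Convex ℝ Q := by
    rintro p ⟨hp1, hp2, hp3, hp4, hp5⟩ q ⟨hq1, hq2, hq3, hq4, hq5⟩ a b' ha hb' hab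
    have h1fst : (a • p + b' • q).1 = a • p.1 + b' • q.1 := rfl
    have h1snd : (a • p + b' • q).2 = a * p.2 + b' * q.2 := rfl
    refine ⟨?_, ?_, ?_, ?_, ?_⟩
    · intro j
      rw [h1fst]
      simp only [Pi.add_apply, Pi.smul_apply, smul_eq_mul]
      nlinarith [hp1 j, hq1 j]
    · rw [h1fst, Matrix.mulVec_add, Matrix.mulVec_smul, Matrix.mulVec_smul, hp2, hq2,
        ← add_smul, hab, one_smul]
    · intro i
      rw [h1fst]
      have h3 : (Matrix.mulVec CC (a • p.1 + b' • q.1)) i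
          = a * Matrix.mulVec CC p.1 i + b' * Matrix.mulVec CC q.1 i := by
        rw [Matrix.mulVec_add, Matrix.mulVec_smul, Matrix.mulVec_smul]
        simp [smul_eq_mul]
      rw [h3]
      have hp3i := hp3 i
      have hq3i := hq3 i
      simp only [Pi.add_apply, Pi.smul_apply, smul_eq_mul] at hp3i hq3i ⊢
      rw [h1snd]
      have key := add_le_add (mul_le_mul_of_nonneg_left hp3i ha)
        (mul_le_mul_of_nonneg_left hq3i hb')
      calc a * (CC *ᵥ p.1) i + b' * (CC *ᵥ q.1) i
          ≤ a * (γ i + p.2 * d i) + b' * (γ i + q.2 * d i) := key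
        _ = (a + b') * γ i + (a * p.2 + b' * q.2) * d i := by ring
        _ = γ i + (a * p.2 + b' * q.2) * d i := by rw [hab, one_mul]
    · rw [h1snd]; nlinarith
    · rw [h1snd]; nlinarith
  -- closedness
  have hcontdot : ∀ (k : ℕ) (M : Matrix (Fin k) (Fin nc) ℝ) (i : Fin k),
      Continuous fun p : ((Fin nc → ℝ) × ℝ) => M.mulVec p.1 i :=
    fun k M i => (continuous_dot (M i)).comp continuous_fst
  have hQclosed : IsClosed Q := by
    have h1 : IsClosed {p : ((Fin nc → ℝ) × ℝ) | ∀ j, 0 ≤ p.1 j} := by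
      rw [Set.setOf_forall]
      exact isClosed_iInter fun j =>
        isClosed_le continuous_const ((continuous_apply j).comp continuous_fst)
    have h2 : IsClosed {p : ((Fin nc → ℝ) × ℝ) | AC.mulVec p.1 = β} := by
      have : {p : ((Fin nc → ℝ) × ℝ) | AC.mulVec p.1 = β} = ⋂ i, {p : ((Fin nc → ℝ) × ℝ) | AC.mulVec p.1 i = β i} := by
        ext p; simp [funext_iff]
      rw [this]
      exact isClosed_iInter fun i => isClosed_eq (hcontdot m AC i) continuous_const
    have h3 : IsClosed {p : ((Fin nc → ℝ) × ℝ) | CC.mulVec p.1 ≤ γ + p.2 • d} := by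
      have : {p : ((Fin nc → ℝ) × ℝ) | CC.mulVec p.1 ≤ γ + p.2 • d} =
          ⋂ i, {p : ((Fin nc → ℝ) × ℝ) | CC.mulVec p.1 i ≤ γ i + p.2 * d i} := by
        ext p; simp [Pi.le_def]
      rw [this]
      exact isClosed_iInter fun i => isClosed_le (hcontdot l CC i)
        (continuous_const.add (continuous_snd.mul continuous_const))
    have h4 : IsClosed {p : ((Fin nc → ℝ) × ℝ) | 0 ≤ p.2} := isClosed_le continuous_const continuous_snd
    have h5 : IsClosed {p : ((Fin nc → ℝ) × ℝ) | p.2 ≤ 1} := isClosed_le continuous_snd continuous_const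
    have : Q = {p : ((Fin nc → ℝ) × ℝ) | ∀ j, 0 ≤ p.1 j} ∩ ({p : ((Fin nc → ℝ) × ℝ) | AC.mulVec p.1 = β} ∩
        ({p : ((Fin nc → ℝ) × ℝ) | CC.mulVec p.1 ≤ γ + p.2 • d} ∩ ({p : ((Fin nc → ℝ) × ℝ) | 0 ≤ p.2} ∩ {p : ((Fin nc → ℝ) × ℝ) | p.2 ≤ 1}))) := by
      ext p
      simp only [hQdef, Set.mem_setOf_eq, Set.mem_inter_iff]
    rw [this]
    exact h1.inter (h2.inter (h3.inter (h4.inter h5)))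
  -- boundedness and compactness
  have hQbdd : Bornology.IsBounded Q := by
    apply Bornology.IsBounded.subset (hbdd.prod (Metric.isBounded_Icc (0:ℝ) 1))
    rintro p ⟨hp1, hp2, _, hp4, hp5⟩
    exact ⟨⟨hp1, hp2⟩, hp4, hp5⟩
  have hQcompact : IsCompact Q := Metric.isCompact_iff_isClosed_bounded.2 ⟨hQclosed, hQbdd⟩
  -- polyhedral description
  have hEfin : (Set.extremePoints ℝ Q).Finite := by
    set ff : ((Fin nc) ⊕ (Fin m) ⊕ (Fin m) ⊕ (Fin l) ⊕ (Fin 2)) → ((Fin nc → ℝ) × ℝ) →ₗ[ℝ] ℝ :=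
      Sum.elim
        (fun j => -((LinearMap.proj j).comp (LinearMap.fst ℝ (Fin nc → ℝ) ℝ)))
        (Sum.elim
          (fun i => (LinearMap.proj i).comp
            ((Matrix.mulVecLin AC).comp (LinearMap.fst ℝ (Fin nc → ℝ) ℝ)))
          (Sum.elim
            (fun i => -((LinearMap.proj i).comp
              ((Matrix.mulVecLin AC).comp (LinearMap.fst ℝ (Fin nc → ℝ) ℝ))))
            (Sum.elim
              (fun i => (LinearMap.proj i).comp
                  ((Matrix.mulVecLin CC).comp (LinearMap.fst ℝ (Fin nc → ℝ) ℝ))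
                - (d i) • (LinearMap.snd ℝ (Fin nc → ℝ) ℝ))
              (fun k => if k = (0 : Fin 2) then -(LinearMap.snd ℝ (Fin nc → ℝ) ℝ)
                else LinearMap.snd ℝ (Fin nc → ℝ) ℝ)))) with hff
    set qq : ((Fin nc) ⊕ (Fin m) ⊕ (Fin m) ⊕ (Fin l) ⊕ (Fin 2)) → ℝ :=
      Sum.elim (fun _ => (0:ℝ))
        (Sum.elim (fun i => β i)
          (Sum.elim (fun i => -(β i))
            (Sum.elim (fun i => γ i)
              (fun k => if k = (0 : Fin 2) then (0:ℝ) else 1)))) with hqq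
    have hpoly : Q = {p : ((Fin nc → ℝ) × ℝ) | ∀ i, ff i p ≤ qq i} := by
      ext p
      constructor
      · rintro ⟨hp1, hp2, hp3, hp4, hp5⟩ i
        rcases i with j | i | i | i | k
        · simp [hff, hqq]
          exact hp1 j
        · simp [hff, hqq, hp2]
        · simp [hff, hqq, hp2]
        · have h1 := hp3 i
          simp only [Pi.add_apply, Pi.smul_apply, smul_eq_mul] at h1
          simp [hff, hqq]
          linarith
        · by_cases hk : k = 0
          · simp [hff, hqq, hk]
            exact hp4
          · simp [hff, hqq, hk]
            exact hp5
      · intro hp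
        refine ⟨?_, ?_, ?_, ?_, ?_⟩
        · intro j
          have h1 := hp (Sum.inl j)
          simp [hff, hqq] at h1
          exact h1
        · funext i
          have h1 := hp (Sum.inr (Sum.inl i))
          have h2 := hp (Sum.inr (Sum.inr (Sum.inl i)))
          simp [hff, hqq] at h1 h2
          linarith
        · intro i
          have h1 := hp (Sum.inr (Sum.inr (Sum.inr (Sum.inl i))))
          simp [hff, hqq] at h1
          simp only [Pi.add_apply, Pi.smul_apply, smul_eq_mul]
          linarith
        · have h1 := hp (Sum.inr (Sum.inr (Sum.inr (Sum.inr 0))))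
          simp [hff, hqq] at h1
          exact h1
        · have h1 := hp (Sum.inr (Sum.inr (Sum.inr (Sum.inr 1))))
          have h10 : (1 : Fin 2) ≠ 0 := by decide
          simp [hff, hqq, h10] at h1
          exact h1
    rw [hpoly]
    exact extremePoints_finite ff qq
  -- Krein-Milman
  have hQhull : convexHull ℝ (Set.extremePoints ℝ Q) = Q := by
    have h1 := closure_convexHull_extremePoints hQcompact hQconv
    rwa [IsClosed.closure_eq (hEfin.isClosed_convexHull (𝕜 := ℝ))] at h1
  set Efin : Finset ((Fin nc → ℝ) × ℝ) := hEfin.toFinset with hEfindef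
  have hEQ : ∀ e ∈ Efin, e ∈ Q := by
    intro e he
    rw [hEfindef, Set.Finite.mem_toFinset] at he
    exact extremePoints_subset he
  -- representation of points of Q as convex combinations
  have hrep : ∀ p ∈ Q, ∃ w : ((Fin nc → ℝ) × ℝ) → ℝ, (∀ e ∈ Efin, 0 ≤ w e) ∧ (∑ e ∈ Efin, w e = 1) ∧
      p.2 = ∑ e ∈ Efin, w e * e.2 ∧ cC ⬝ᵥ p.1 = ∑ e ∈ Efin, w e * (cC ⬝ᵥ e.1) := by
    intro p hp
    have hmem : p ∈ convexHull ℝ (Efin : Set ((Fin nc → ℝ) × ℝ)) := by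
      rw [hEfindef, Set.Finite.coe_toFinset, hQhull]
      exact hp
    rw [Finset.convexHull_eq] at hmem
    obtain ⟨w, hw0, hw1, hwc⟩ := hmem
    have hsum : p = ∑ e ∈ Efin, w e • e := by
      rw [← hwc, Finset.centerMass_eq_of_sum_1 _ _ hw1]
      simp
    refine ⟨w, hw0, hw1, ?_, ?_⟩
    · have h2 : (LinearMap.snd ℝ (Fin nc → ℝ) ℝ) p
          = (LinearMap.snd ℝ (Fin nc → ℝ) ℝ) (∑ e ∈ Efin, w e • e) := by rw [← hsum]
      rw [map_sum] at h2
      simpa [smul_eq_mul] using h2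
    · have h1 : p.1 = ∑ e ∈ Efin, w e • e.1 := by
        have h2 : (LinearMap.fst ℝ (Fin nc → ℝ) ℝ) p
            = (LinearMap.fst ℝ (Fin nc → ℝ) ℝ) (∑ e ∈ Efin, w e • e) := by rw [← hsum]
        rw [map_sum] at h2
        simpa using h2
      rw [h1, dot_sum]
      exact Finset.sum_congr rfl fun e _ => dot_smul' cC (w e) e.1
  -- a point of Q with t-coordinate 0
  have hx₀Q : ((x₀, (0:ℝ)) : ((Fin nc → ℝ) × ℝ)) ∈ Q := by
    refine ⟨hx₀.1, hx₀.2.1, ?_, le_refl 0, zero_le_one⟩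
    intro i
    have h1 := hx₀.2.2 i
    have h2 : t₀ * d i ≤ 0 := mul_nonpos_of_nonneg_of_nonpos (le_of_lt ht₀.1) (hd i)
    simp only [Pi.add_apply, Pi.smul_apply, smul_eq_mul] at h1 ⊢
    linarith
  have hxt₀Q : ((x₀, t₀) : ((Fin nc → ℝ) × ℝ)) ∈ Q := ⟨hx₀.1, hx₀.2.1, hx₀.2.2, le_of_lt ht₀.1, ht₀.2⟩
  -- existence of an extreme point with t-coordinate 0
  have hE0 : ∃ e ∈ Efin, e.2 = 0 := by
    obtain ⟨w, hw0, hw1, hw2, _⟩ := hrep _ hx₀Q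
    by_contra hno
    push_neg at hno
    have hterm : ∀ e ∈ Efin, w e * e.2 = 0 := by
      rw [← Finset.sum_eq_zero_iff_of_nonneg]
      · exact hw2.symm
      · intro e he
        exact mul_nonneg (hw0 e he) ((hEQ e he).2.2.2.1)
    obtain ⟨e, he, hwe⟩ : ∃ e ∈ Efin, w e ≠ 0 := by
      by_contra hall
      push_neg at hall
      rw [Finset.sum_eq_zero hall] at hw1
      norm_num at hw1
    have := hterm e he
    rcases mul_eq_zero.1 this with h | h
    · exact hwe h
    · exact hno e he h
  -- existence of an extreme point with positive t-coordinate
  have hEp : ∃ e ∈ Efin, 0 < e.2 := by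
    obtain ⟨w, hw0, hw1, hw2, _⟩ := hrep _ hxt₀Q
    by_contra hno
    push_neg at hno
    have : ∀ e ∈ Efin, w e * e.2 = 0 := by
      intro e he
      have h2 := (hEQ e he).2.2.2.1
      have := hno e he
      have : e.2 = 0 := le_antisymm this h2
      rw [this, mul_zero]
    rw [Finset.sum_eq_zero this] at hw2
    exact absurd hw2.symm (ne_of_lt ht₀.1)
  set F0 : Finset ((Fin nc → ℝ) × ℝ) := Efin.filter (fun e => e.2 = 0) with hF0def
  have hF0ne : F0.Nonempty := by
    obtain ⟨e, he, h0⟩ := hE0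
    exact ⟨e, Finset.mem_filter.2 ⟨he, h0⟩⟩
  set g0 : ℝ := F0.inf' hF0ne (fun e => cC ⬝ᵥ e.1) with hg0def
  obtain ⟨e₀, he₀F0, he₀g0⟩ := Finset.exists_mem_eq_inf' hF0ne (fun e => cC ⬝ᵥ e.1)
  have he₀E : e₀ ∈ Efin := (Finset.mem_filter.1 he₀F0).1
  have he₀0 : e₀.2 = 0 := (Finset.mem_filter.1 he₀F0).2
  set Fp : Finset ((Fin nc → ℝ) × ℝ) := Efin.filter (fun e => 0 < e.2) with hFpdef
  have hFpne : Fp.Nonempty := by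
    obtain ⟨e, he, h0⟩ := hEp
    exact ⟨e, Finset.mem_filter.2 ⟨he, h0⟩⟩
  set sl : ℝ := Fp.inf' hFpne (fun e => (cC ⬝ᵥ e.1 - g0) / e.2) with hsldef
  obtain ⟨estar, hestarFp, hestarsl⟩ :=
    Finset.exists_mem_eq_inf' hFpne (fun e => (cC ⬝ᵥ e.1 - g0) / e.2)
  have hestarE : estar ∈ Efin := (Finset.mem_filter.1 hestarFp).1
  have hestar2 : 0 < estar.2 := (Finset.mem_filter.1 hestarFp).2
  -- key per-extreme-point inequality
  have hkey : ∀ e ∈ Efin, g0 + sl * e.2 ≤ cC ⬝ᵥ e.1 := by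
    intro e he
    by_cases h0 : e.2 = 0
    · have heF0 : e ∈ F0 := Finset.mem_filter.2 ⟨he, h0⟩
      have := Finset.inf'_le (fun e => cC ⬝ᵥ e.1) heF0
      rw [h0, mul_zero, add_zero]
      exact this
    · have hpos : 0 < e.2 := lt_of_le_of_ne ((hEQ e he).2.2.2.1) (Ne.symm h0)
      have heFp : e ∈ Fp := Finset.mem_filter.2 ⟨he, hpos⟩
      have h1 : sl ≤ (cC ⬝ᵥ e.1 - g0) / e.2 := Finset.inf'_le _ heFp
      have := (le_div_iff₀ hpos).1 h1
      linarith
  refine ⟨estar.2, sl, g0, hestar2, (hEQ estar hestarE).2.2.2.2, ?_, ?_⟩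
  · -- attainment on [0, δ]
    intro t ht
    set θ : ℝ := t / estar.2 with hθdef
    have hθ0 : 0 ≤ θ := div_nonneg ht.1 (le_of_lt hestar2)
    have hθ1 : θ ≤ 1 := by
      rw [hθdef, div_le_one hestar2]
      exact ht.2
    have hmem : (1 - θ) • e₀ + θ • estar ∈ Q :=
      hQconv (hEQ e₀ he₀E) (hEQ estar hestarE) (by linarith) hθ0 (by ring)
    have hsnd : ((1 - θ) • e₀ + θ • estar).2 = t := by
      have : ((1 - θ) • e₀ + θ • estar).2 = (1 - θ) * e₀.2 + θ * estar.2 := rfl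
      rw [this, he₀0, mul_zero, zero_add, hθdef, div_mul_cancel₀]
      exact ne_of_gt hestar2
    obtain ⟨hm1, hm2, hm3, _, _⟩ := hmem
    refine ⟨((1 - θ) • e₀ + θ • estar).1, ⟨hm1, hm2, ?_⟩, ?_⟩
    · rw [← hsnd]; exact hm3
    · have hfst : ((1 - θ) • e₀ + θ • estar).1 = (1 - θ) • e₀.1 + θ • estar.1 := rfl
      rw [hfst, dot_add', dot_smul', dot_smul', ← he₀g0]
      have hslval : cC ⬝ᵥ estar.1 = g0 + sl * estar.2 := by
        have : sl = (cC ⬝ᵥ estar.1 - g0) / estar.2 := hestarsl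
        rw [this, div_mul_cancel₀ _ (ne_of_gt hestar2)]
        ring
      rw [hslval, hθdef]
      field_simp
      ring
  · -- global lower bound
    intro t ht x hx
    have hxQ : ((x, t) : ((Fin nc → ℝ) × ℝ)) ∈ Q := ⟨hx.1, hx.2.1, hx.2.2, ht.1, ht.2⟩
    obtain ⟨w, hw0, hw1, hw2, hw3⟩ := hrep _ hxQ
    have hbound : ∀ e ∈ Efin, w e * (g0 + sl * e.2) ≤ w e * (cC ⬝ᵥ e.1) :=
      fun e he => mul_le_mul_of_nonneg_left (hkey e he) (hw0 e he)
    have h1 : ∑ e ∈ Efin, w e * (g0 + sl * e.2) ≤ ∑ e ∈ Efin, w e * (cC ⬝ᵥ e.1) :=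
      Finset.sum_le_sum hbound
    have h2 : ∑ e ∈ Efin, w e * (g0 + sl * e.2)
        = g0 * (∑ e ∈ Efin, w e) + sl * (∑ e ∈ Efin, w e * e.2) := by
      rw [Finset.mul_sum, Finset.mul_sum, ← Finset.sum_add_distrib]
      exact Finset.sum_congr rfl fun e _ => by ring
    rw [h2, hw1, mul_one, ← hw2] at h1
    rw [hw3]
    simpa using h1

end Stmt13Aux
namespace Stmt13Aux

open Matrix Filter Topology Set

variable {l m nc r : ℕ}

lemma obj_continuous (cI : Fin r → ℝ) (cC : Fin nc → ℝ) :
    Continuous fun p : (Fin r → ℝ) × (Fin nc → ℝ) => cI ⬝ᵥ p.1 + cC ⬝ᵥ p.2 :=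
  ((continuous_dot cI).comp continuous_fst).add ((continuous_dot cC).comp continuous_snd)

lemma xmo_closed (AI : Matrix (Fin m) (Fin r) ℝ) (AC : Matrix (Fin m) (Fin nc) ℝ)
    (b : Fin m → ℝ) : IsClosed (XMO AI AC b) := by
  have h1 : IsClosed {p : (Fin r → ℝ) × (Fin nc → ℝ) | IsNatVec p.1} := by
    have he : {p : (Fin r → ℝ) × (Fin nc → ℝ) | IsNatVec p.1} =
        ⋂ i, (fun p : (Fin r → ℝ) × (Fin nc → ℝ) => p.1 i) ⁻¹' (Set.range ((↑) : ℕ → ℝ)) := by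
      ext p
      simp only [Set.mem_setOf_eq, Set.mem_iInter, Set.mem_preimage, Set.mem_range, IsNatVec]
      constructor
      · intro h i; obtain ⟨k, hk⟩ := h i; exact ⟨k, hk.symm⟩
      · intro h i; obtain ⟨k, hk⟩ := h i; exact ⟨k, hk.symm⟩
    rw [he]
    exact isClosed_iInter fun i => IsClosed.preimage
      ((continuous_apply i).comp continuous_fst) Nat.isClosedEmbedding_coe_real.isClosed_range
  have h2 : IsClosed {p : (Fin r → ℝ) × (Fin nc → ℝ) | ∀ j, 0 ≤ p.2 j} := by
    rw [Set.setOf_forall]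
    exact isClosed_iInter fun j =>
      isClosed_le continuous_const ((continuous_apply j).comp continuous_snd)
  have h3 : IsClosed {p : (Fin r → ℝ) × (Fin nc → ℝ) | AI.mulVec p.1 + AC.mulVec p.2 = b} := by
    have he : {p : (Fin r → ℝ) × (Fin nc → ℝ) | AI.mulVec p.1 + AC.mulVec p.2 = b} =
        ⋂ i, {p : (Fin r → ℝ) × (Fin nc → ℝ) | AI.mulVec p.1 i + AC.mulVec p.2 i = b i} := by
      ext p; simp [funext_iff]
    rw [he]
    exact isClosed_iInter fun i => isClosed_eq
      (((continuous_dot (AI i)).comp continuous_fst).add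
        ((continuous_dot (AC i)).comp continuous_snd)) continuous_const
  have he : XMO AI AC b = {p : (Fin r → ℝ) × (Fin nc → ℝ) | IsNatVec p.1} ∩
      ({p | ∀ j, 0 ≤ p.2 j} ∩ {p | AI.mulVec p.1 + AC.mulVec p.2 = b}) := by
    ext p
    simp only [XMO, Set.mem_setOf_eq, Set.mem_inter_iff]
  rw [he]
  exact h1.inter (h2.inter h3)

lemma xmo_compact (AI : Matrix (Fin m) (Fin r) ℝ) (AC : Matrix (Fin m) (Fin nc) ℝ)
    (b : Fin m → ℝ) (hbdd : Bornology.IsBounded (XMO AI AC b)) : IsCompact (XMO AI AC b) :=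
  Metric.isCompact_iff_isClosed_bounded.2 ⟨xmo_closed AI AC b, hbdd⟩

lemma sreg_closed (AI : Matrix (Fin m) (Fin r) ℝ) (AC : Matrix (Fin m) (Fin nc) ℝ)
    (b : Fin m → ℝ) (CI : Matrix (Fin l) (Fin r) ℝ) (CC : Matrix (Fin l) (Fin nc) ℝ)
    (ζ : Fin l → ℝ) : IsClosed (Sreg AI AC b CI CC ζ) := by
  have h4 : IsClosed {p : (Fin r → ℝ) × (Fin nc → ℝ) | CI.mulVec p.1 + CC.mulVec p.2 ≤ ζ} := by
    have he : {p : (Fin r → ℝ) × (Fin nc → ℝ) | CI.mulVec p.1 + CC.mulVec p.2 ≤ ζ} =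
        ⋂ i, {p : (Fin r → ℝ) × (Fin nc → ℝ) | CI.mulVec p.1 i + CC.mulVec p.2 i ≤ ζ i} := by
      ext p; simp [Pi.le_def]
    rw [he]
    exact isClosed_iInter fun i => isClosed_le
      (((continuous_dot (CI i)).comp continuous_fst).add
        ((continuous_dot (CC i)).comp continuous_snd)) continuous_const
  have he : Sreg AI AC b CI CC ζ = XMO AI AC b ∩
      {p : (Fin r → ℝ) × (Fin nc → ℝ) | CI.mulVec p.1 + CC.mulVec p.2 ≤ ζ} := rfl
  rw [he]
  exact (xmo_closed AI AC b).inter h4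

lemma sreg_compact (AI : Matrix (Fin m) (Fin r) ℝ) (AC : Matrix (Fin m) (Fin nc) ℝ)
    (b : Fin m → ℝ) (CI : Matrix (Fin l) (Fin r) ℝ) (CC : Matrix (Fin l) (Fin nc) ℝ)
    (ζ : Fin l → ℝ) (hbdd : Bornology.IsBounded (XMO AI AC b)) :
    IsCompact (Sreg AI AC b CI CC ζ) :=
  (xmo_compact AI AC b hbdd).of_isClosed_subset (sreg_closed AI AC b CI CC ζ)
    (fun _ hp => hp.1)

/-- Attainment of the restricted value function. -/
lemma zRVF_attained (cI : Fin r → ℝ) (cC : Fin nc → ℝ) (AI : Matrix (Fin m) (Fin r) ℝ)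
    (AC : Matrix (Fin m) (Fin nc) ℝ) (b : Fin m → ℝ) (CI : Matrix (Fin l) (Fin r) ℝ)
    (CC : Matrix (Fin l) (Fin nc) ℝ) (ζ : Fin l → ℝ)
    (hbdd : Bornology.IsBounded (XMO AI AC b)) (hne : (Sreg AI AC b CI CC ζ).Nonempty) :
    ∃ p ∈ Sreg AI AC b CI CC ζ,
      zRVF cI cC AI AC b CI CC ζ = ((cI ⬝ᵥ p.1 + cC ⬝ᵥ p.2 : ℝ) : EReal) ∧
      ∀ q ∈ Sreg AI AC b CI CC ζ, cI ⬝ᵥ p.1 + cC ⬝ᵥ p.2 ≤ cI ⬝ᵥ q.1 + cC ⬝ᵥ q.2 := by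
  obtain ⟨p, hp, hmin⟩ := (sreg_compact AI AC b CI CC ζ hbdd).exists_isMinOn hne
    (obj_continuous cI cC).continuousOn
  refine ⟨p, hp, ?_, fun q hq => hmin hq⟩
  apply le_antisymm
  · exact sInf_le ⟨p, hp, rfl⟩
  · apply le_sInf
    rintro y ⟨q, hq, rfl⟩
    exact EReal.coe_le_coe_iff.2 (hmin hq)

lemma zRVF_top (cI : Fin r → ℝ) (cC : Fin nc → ℝ) (AI : Matrix (Fin m) (Fin r) ℝ)
    (AC : Matrix (Fin m) (Fin nc) ℝ) (b : Fin m → ℝ) (CI : Matrix (Fin l) (Fin r) ℝ)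
    (CC : Matrix (Fin l) (Fin nc) ℝ) (ζ : Fin l → ℝ)
    (hempty : Sreg AI AC b CI CC ζ = ∅) : zRVF cI cC AI AC b CI CC ζ = ⊤ := by
  have : {y : EReal | ∃ p ∈ Sreg AI AC b CI CC ζ,
      y = ((cI ⬝ᵥ p.1 + cC ⬝ᵥ p.2 : ℝ) : EReal)} = ∅ := by
    rw [Set.eq_empty_iff_forall_notMem]
    rintro y ⟨p, hp, _⟩
    rw [hempty] at hp
    exact hp
  rw [zRVF, this, sInf_empty]

lemma zRVF_anti (cI : Fin r → ℝ) (cC : Fin nc → ℝ) (AI : Matrix (Fin m) (Fin r) ℝ)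
    (AC : Matrix (Fin m) (Fin nc) ℝ) (b : Fin m → ℝ) (CI : Matrix (Fin l) (Fin r) ℝ)
    (CC : Matrix (Fin l) (Fin nc) ℝ) {ζ₁ ζ₂ : Fin l → ℝ} (h : ζ₁ ≤ ζ₂) :
    zRVF cI cC AI AC b CI CC ζ₂ ≤ zRVF cI cC AI AC b CI CC ζ₁ := by
  apply sInf_le_sInf
  rintro y ⟨p, hp, rfl⟩
  exact ⟨p, ⟨hp.1, le_trans hp.2 h⟩, rfl⟩

lemma SI_finite (AI : Matrix (Fin m) (Fin r) ℝ) (AC : Matrix (Fin m) (Fin nc) ℝ)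
    (b : Fin m → ℝ) (hbdd : Bornology.IsBounded (XMO AI AC b)) : (SI AI AC b).Finite := by
  classical
  obtain ⟨R, hR⟩ := hbdd.subset_closedBall 0
  set N : ℕ := ⌈R⌉₊ with hN
  have hsub : SI AI AC b ⊆
      (fun f : Fin r → ℕ => (fun i => (f i : ℝ))) '' {f : Fin r → ℕ | ∀ i, f i ≤ N} := by
    rintro xI ⟨xC, hx⟩
    have hnat := hx.1
    set f : Fin r → ℕ := fun i => Classical.choose (hnat i) with hf
    have hfspec : ∀ i, xI i = (f i : ℝ) := fun i => Classical.choose_spec (hnat i)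
    refine ⟨f, ?_, by funext i; exact (hfspec i).symm⟩
    intro i
    have hball := hR hx
    rw [Metric.mem_closedBall, dist_zero_right] at hball
    have h1 : |xI i| ≤ ‖(xI, xC)‖ := by
      calc |xI i| = ‖xI i‖ := rfl
        _ ≤ ‖xI‖ := norm_le_pi_norm xI i
        _ ≤ ‖(xI, xC)‖ := norm_fst_le (xI, xC)
    have h2 : (f i : ℝ) ≤ R := by
      rw [← hfspec i]
      calc xI i ≤ |xI i| := le_abs_self _
        _ ≤ R := le_trans h1 hball
    have h3 : (f i : ℝ) ≤ (N : ℝ) := le_trans h2 (Nat.le_ceil R)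
    exact_mod_cast h3
  apply Set.Finite.subset _ hsub
  apply Set.Finite.image
  have : {f : Fin r → ℕ | ∀ i, f i ≤ N} = Set.pi Set.univ (fun _ => Set.Iic N) := by
    ext f; simp [Set.mem_pi, Pi.le_def]
  rw [this]
  exact Set.Finite.pi fun _ => Set.finite_Iic N

/-- Every feasible point is dominated by an efficient point. -/
lemma exists_efficient_le (cI : Fin r → ℝ) (cC : Fin nc → ℝ) (AI : Matrix (Fin m) (Fin r) ℝ)
    (AC : Matrix (Fin m) (Fin nc) ℝ) (b : Fin m → ℝ) (CI : Matrix (Fin l) (Fin r) ℝ)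
    (CC : Matrix (Fin l) (Fin nc) ℝ) (hbdd : Bornology.IsBounded (XMO AI AC b))
    (q : (Fin r → ℝ) × (Fin nc → ℝ)) (hq : q ∈ XMO AI AC b) :
    ∃ p, IsEfficient cI cC AI AC b CI CC p ∧
      CritVec cI cC CI CC p ≤ CritVec cI cC CI CC q := by
  classical
  set R : Set ((Fin r → ℝ) × (Fin nc → ℝ)) :=
    {p ∈ XMO AI AC b | CritVec cI cC CI CC p ≤ CritVec cI cC CI CC q} with hRdef
  have hRclosed : IsClosed R := by
    have h4 : IsClosed {p : (Fin r → ℝ) × (Fin nc → ℝ) |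
        CritVec cI cC CI CC p ≤ CritVec cI cC CI CC q} := by
      have he : {p : (Fin r → ℝ) × (Fin nc → ℝ) |
          CritVec cI cC CI CC p ≤ CritVec cI cC CI CC q} =
          {p : (Fin r → ℝ) × (Fin nc → ℝ) |
            cI ⬝ᵥ p.1 + cC ⬝ᵥ p.2 ≤ cI ⬝ᵥ q.1 + cC ⬝ᵥ q.2} ∩
          ⋂ i, {p : (Fin r → ℝ) × (Fin nc → ℝ) |
            CI.mulVec p.1 i + CC.mulVec p.2 i ≤ CI.mulVec q.1 i + CC.mulVec q.2 i} := by
        ext p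
        simp only [CritVec, Set.mem_setOf_eq, Set.mem_inter_iff, Set.mem_iInter,
          Prod.le_def, Pi.le_def, Pi.add_apply]
      rw [he]
      exact (isClosed_le (obj_continuous cI cC) continuous_const).inter
        (isClosed_iInter fun i => isClosed_le
          (((continuous_dot (CI i)).comp continuous_fst).add
            ((continuous_dot (CC i)).comp continuous_snd)) continuous_const)
    exact (xmo_closed AI AC b).inter h4
  have hRcompact : IsCompact R :=
    (xmo_compact AI AC b hbdd).of_isClosed_subset hRclosed (fun _ hp => hp.1)
  have hRne : R.Nonempty := ⟨q, hq, le_refl _⟩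
  have hcont : Continuous fun p : (Fin r → ℝ) × (Fin nc → ℝ) =>
      (cI ⬝ᵥ p.1 + cC ⬝ᵥ p.2) + ∑ i, (CI.mulVec p.1 i + CC.mulVec p.2 i) := by
    apply (obj_continuous cI cC).add
    apply continuous_finset_sum
    intro i _
    exact ((continuous_dot (CI i)).comp continuous_fst).add
      ((continuous_dot (CC i)).comp continuous_snd)
  obtain ⟨p, hpR, hpmin⟩ := hRcompact.exists_isMinOn hRne hcont.continuousOn
  refine ⟨p, ⟨hpR.1, ?_⟩, hpR.2⟩
  rintro ⟨q', hq', hle, hne⟩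
  have hq'R : q' ∈ R := ⟨hq', le_trans hle hpR.2⟩
  have hmin := hpmin hq'R
  -- derive strict inequality of sums from hle, hne
  have h1 : cI ⬝ᵥ q'.1 + cC ⬝ᵥ q'.2 ≤ cI ⬝ᵥ p.1 + cC ⬝ᵥ p.2 := hle.1
  have h2 : ∀ i, CI.mulVec q'.1 i + CC.mulVec q'.2 i ≤ CI.mulVec p.1 i + CC.mulVec p.2 i := by
    intro i
    have := hle.2 i
    simpa [CritVec] using this
  have hstrict : (cI ⬝ᵥ q'.1 + cC ⬝ᵥ q'.2) + ∑ i, (CI.mulVec q'.1 i + CC.mulVec q'.2 i)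
      < (cI ⬝ᵥ p.1 + cC ⬝ᵥ p.2) + ∑ i, (CI.mulVec p.1 i + CC.mulVec p.2 i) := by
    rcases lt_or_eq_of_le h1 with h1' | h1'
    · exact add_lt_add_of_lt_of_le h1' (Finset.sum_le_sum fun i _ => h2 i)
    · have h3 : ∃ i, CI.mulVec q'.1 i + CC.mulVec q'.2 i < CI.mulVec p.1 i + CC.mulVec p.2 i := by
        by_contra hno
        push_neg at hno
        apply hne
        have hall : ∀ i, CI.mulVec q'.1 i + CC.mulVec q'.2 i
            = CI.mulVec p.1 i + CC.mulVec p.2 i :=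
          fun i => le_antisymm (h2 i) (hno i)
        have hsnd : (CritVec cI cC CI CC q').2 = (CritVec cI cC CI CC p).2 := by
          funext i
          simpa [CritVec] using hall i
        have hfst : (CritVec cI cC CI CC q').1 = (CritVec cI cC CI CC p).1 := h1'
        exact Prod.ext hfst hsnd
      obtain ⟨i0, hi0⟩ := h3
      rw [h1']
      apply add_lt_add_of_le_of_lt (le_refl _)
      apply Finset.sum_lt_sum (fun i _ => h2 i) ⟨i0, Finset.mem_univ i0, hi0⟩
  rw [isMinOn_iff] at hpmin
  have := hpmin q' hq'R
  linarith

end Stmt13Aux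
namespace Stmt13Aux

open Matrix Filter Topology Set

variable {l m nc r : ℕ}

lemma mem_sreg_iff (AI : Matrix (Fin m) (Fin r) ℝ) (AC : Matrix (Fin m) (Fin nc) ℝ)
    (b : Fin m → ℝ) (CI : Matrix (Fin l) (Fin r) ℝ) (CC : Matrix (Fin l) (Fin nc) ℝ)
    (ζ' : Fin l → ℝ) (p : (Fin r → ℝ) × (Fin nc → ℝ)) :
    p ∈ Sreg AI AC b CI CC ζ' ↔ IsNatVec p.1 ∧ ((∀ j, 0 ≤ p.2 j) ∧
      AC.mulVec p.2 = b - AI.mulVec p.1 ∧ CC.mulVec p.2 ≤ ζ' - CI.mulVec p.1) := by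
  constructor
  · rintro ⟨⟨h1, h2, h3⟩, h4⟩
    refine ⟨h1, h2, eq_sub_iff_add_eq'.2 h3, ?_⟩
    intro i
    have := h4 i
    simp only [Pi.add_apply, Pi.sub_apply] at this ⊢
    linarith
  · rintro ⟨h1, h2, h3, h4⟩
    refine ⟨⟨h1, h2, eq_sub_iff_add_eq'.1 h3⟩, ?_⟩
    intro i
    have := h4 i
    simp only [Pi.add_apply, Pi.sub_apply] at this ⊢
    linarith

/-- Under hypothesis (i), the restricted value function strictly increases when moving
into the (nonzero, nonpositive) direction `d`. -/
lemma z_strict (cI : Fin r → ℝ) (cC : Fin nc → ℝ) (AI : Matrix (Fin m) (Fin r) ℝ)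
    (AC : Matrix (Fin m) (Fin nc) ℝ) (b : Fin m → ℝ) (CI : Matrix (Fin l) (Fin r) ℝ)
    (CC : Matrix (Fin l) (Fin nc) ℝ) (hbdd : Bornology.IsBounded (XMO AI AC b))
    (ζ : Fin l → ℝ) (hζ : ζ ∈ Cdom AI AC b CI CC)
    (hyp : ∀ p : (Fin r → ℝ) × (Fin nc → ℝ), IsEfficient cI cC AI AC b CI CC p →
        ((cI ⬝ᵥ p.1 + cC ⬝ᵥ p.2 : ℝ) : EReal) = zRVF cI cC AI AC b CI CC ζ →
        CI.mulVec p.1 + CC.mulVec p.2 ≤ ζ →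
        CI.mulVec p.1 + CC.mulVec p.2 = ζ)
    (d : Fin l → ℝ) (hdle : d ≤ 0) (hdne : d ≠ 0) (t : ℝ) (ht : 0 < t) :
    zRVF cI cC AI AC b CI CC (ζ + t • d) ≠ zRVF cI cC AI AC b CI CC ζ := by
  obtain ⟨pm, hpm, hz0eq, hz0min⟩ := zRVF_attained cI cC AI AC b CI CC ζ hbdd hζ
  intro heq
  have hζle : ζ + t • d ≤ ζ := by
    intro i
    simp only [Pi.add_apply, Pi.smul_apply, smul_eq_mul]
    linarith [mul_nonpos_of_nonneg_of_nonpos ht.le (hdle i)]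
  -- the perturbed region is nonempty
  have hne' : (Sreg AI AC b CI CC (ζ + t • d)).Nonempty := by
    by_contra hno
    rw [Set.not_nonempty_iff_eq_empty] at hno
    have := zRVF_top cI cC AI AC b CI CC (ζ + t • d) hno
    rw [this, hz0eq] at heq
    exact (EReal.coe_ne_top _) heq.symm
  obtain ⟨qm, hqm, hqeq, _⟩ := zRVF_attained cI cC AI AC b CI CC (ζ + t • d) hbdd hne'
  have hqval : cI ⬝ᵥ qm.1 + cC ⬝ᵥ qm.2 = cI ⬝ᵥ pm.1 + cC ⬝ᵥ pm.2 := by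
    have := hqeq.symm.trans (heq.trans hz0eq)
    exact EReal.coe_eq_coe_iff.1 this
  obtain ⟨p, heff, hle⟩ := exists_efficient_le cI cC AI AC b CI CC hbdd qm hqm.1
  have hle2 : ∀ i, CI.mulVec p.1 i + CC.mulVec p.2 i
      ≤ CI.mulVec qm.1 i + CC.mulVec qm.2 i := by
    intro i
    have := hle.2 i
    simpa [CritVec] using this
  have hle1 : cI ⬝ᵥ p.1 + cC ⬝ᵥ p.2 ≤ cI ⬝ᵥ qm.1 + cC ⬝ᵥ qm.2 := hle.1
  have hpSreg : p ∈ Sreg AI AC b CI CC ζ := by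
    refine ⟨heff.1, ?_⟩
    intro i
    have h1 := hle2 i
    have h2 := hqm.2 i
    have h3 := hζle i
    simp only [Pi.add_apply, Pi.smul_apply, smul_eq_mul] at h2 h3 ⊢
    linarith
  have hpval : cI ⬝ᵥ p.1 + cC ⬝ᵥ p.2 = cI ⬝ᵥ pm.1 + cC ⬝ᵥ pm.2 :=
    le_antisymm (by linarith) (hz0min p hpSreg)
  have hCp : CI.mulVec p.1 + CC.mulVec p.2 = ζ := by
    apply hyp p heff
    · rw [hz0eq]
      exact congrArg _ hpval
    · exact hpSreg.2
  obtain ⟨i0, hi0⟩ := Function.ne_iff.1 hdne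
  have hdi0 : d i0 < 0 := lt_of_le_of_ne (hdle i0) hi0
  have h1 := hle2 i0
  have h2 := hqm.2 i0
  have h3 : (CI.mulVec p.1 + CC.mulVec p.2) i0 = ζ i0 := by rw [hCp]
  simp only [Pi.add_apply, Pi.smul_apply, smul_eq_mul] at h2 h3
  linarith [mul_neg_of_pos_of_neg ht hdi0]

end Stmt13Aux
open Stmt13Aux in
theorem stmt_13 {l m nc r : ℕ} (cI : Fin r → ℝ) (cC : Fin nc → ℝ) (AI : Matrix (Fin m) (Fin r) ℝ)
    (AC : Matrix (Fin m) (Fin nc) ℝ) (b : Fin m → ℝ) (CI : Matrix (Fin l) (Fin r) ℝ)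
    (CC : Matrix (Fin l) (Fin nc) ℝ)
    (hne : (XMO AI AC b).Nonempty) (hbdd : Bornology.IsBounded (XMO AI AC b))
    (ζ : Fin l → ℝ) (hζ : ζ ∈ Cdom AI AC b CI CC) :
    (∀ p : (Fin r → ℝ) × (Fin nc → ℝ), IsEfficient cI cC AI AC b CI CC p →
        ((cI ⬝ᵥ p.1 + cC ⬝ᵥ p.2 : ℝ) : EReal) = zRVF cI cC AI AC b CI CC ζ →
        CI.mulVec p.1 + CC.mulVec p.2 ≤ ζ →
        CI.mulVec p.1 + CC.mulVec p.2 = ζ)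
    ↔ (∀ d : Fin l → ℝ, d ≤ 0 → d ≠ 0 →
        ∃ L : EReal, HasDirDeriv (zRVF cI cC AI AC b CI CC) ζ d L ∧ 0 < L) := by
  classical
  obtain ⟨pm, hpm, hz0eq, hz0min⟩ := zRVF_attained cI cC AI AC b CI CC ζ hbdd hζ
  set z0 : ℝ := cI ⬝ᵥ pm.1 + cC ⬝ᵥ pm.2 with hz0def
  constructor
  · -- (i) → (ii)
    intro hyp d hdle hdne
    have hζle : ∀ t : ℝ, 0 ≤ t → ζ + t • d ≤ ζ := by
      intro t ht i
      simp only [Pi.add_apply, Pi.smul_apply, smul_eq_mul]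
      linarith [mul_nonpos_of_nonneg_of_nonpos ht (hdle i)]
    have hmono : ∀ t : ℝ, 0 ≤ t → (z0 : EReal) ≤ zRVF cI cC AI AC b CI CC (ζ + t • d) := by
      intro t ht
      rw [← hz0eq]
      exact zRVF_anti cI cC AI AC b CI CC (hζle t ht)
    set S : Finset (Fin r → ℝ) := (SI_finite AI AC b hbdd).toFinset with hSdef
    set C' : Finset (Fin r → ℝ) := S.filter (fun xh => ∃ t ∈ Set.Ioc (0:ℝ) 1,
      ∃ x : Fin nc → ℝ, (∀ j, 0 ≤ x j) ∧ AC.mulVec x = b - AI.mulVec xh ∧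
        CC.mulVec x ≤ (ζ - CI.mulVec xh) + t • d) with hC'def
    have hnatS : ∀ xh ∈ S, IsNatVec xh := by
      intro xh hxh
      rw [hSdef, Set.Finite.mem_toFinset] at hxh
      obtain ⟨xC, hxmo⟩ := hxh
      exact hxmo.1
    -- membership characterization of perturbed regions
    have hmem : ∀ (t : ℝ) (p : (Fin r → ℝ) × (Fin nc → ℝ)),
        p ∈ Sreg AI AC b CI CC (ζ + t • d) ↔ IsNatVec p.1 ∧ ((∀ j, 0 ≤ p.2 j) ∧
          AC.mulVec p.2 = b - AI.mulVec p.1 ∧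
          CC.mulVec p.2 ≤ (ζ - CI.mulVec p.1) + t • d) := by
      intro t p
      rw [mem_sreg_iff]
      rw [add_sub_right_comm]
    --dichotomy data on C'
    have hdata : ∀ e : {x // x ∈ C'}, ∃ δ s φ0 : ℝ, 0 < δ ∧ δ ≤ 1 ∧
        (∀ t ∈ Set.Icc (0:ℝ) δ, ∃ x : Fin nc → ℝ,
          ((∀ j, 0 ≤ x j) ∧ AC.mulVec x = b - AI.mulVec e.1 ∧
            CC.mulVec x ≤ (ζ - CI.mulVec e.1) + t • d) ∧ cC ⬝ᵥ x = φ0 + s * t) ∧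
        (∀ t ∈ Set.Icc (0:ℝ) 1, ∀ x : Fin nc → ℝ,
          ((∀ j, 0 ≤ x j) ∧ AC.mulVec x = b - AI.mulVec e.1 ∧
            CC.mulVec x ≤ (ζ - CI.mulVec e.1) + t • d) → φ0 + s * t ≤ cC ⬝ᵥ x) := by
      rintro ⟨xh, hxh⟩
      have hxhS : xh ∈ S := Finset.mem_of_mem_filter _ hxh
      have hbdd' : Bornology.IsBounded
          {x : Fin nc → ℝ | (∀ j, 0 ≤ x j) ∧ AC.mulVec x = b - AI.mulVec xh} := by
        have hsub : {x : Fin nc → ℝ | (∀ j, 0 ≤ x j) ∧ AC.mulVec x = b - AI.mulVec xh} ⊆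
            Prod.snd '' XMO AI AC b := by
          rintro x ⟨hx1, hx2⟩
          exact ⟨(xh, x), ⟨hnatS xh hxhS, hx1, eq_sub_iff_add_eq'.1 hx2⟩, rfl⟩
        exact (((xmo_compact AI AC b hbdd).image continuous_snd).isBounded).subset hsub
      rcases lp_dichotomy cC AC CC (b - AI.mulVec xh) (ζ - CI.mulVec xh) d hdle hbdd' with hA | hB
      · exfalso
        obtain ⟨t, ht, x, hx⟩ := (Finset.mem_filter.1 hxh).2
        exact hA t ht x hx
      · exact hB
    choose δf sf φf hδpos hδle1 hup hlow using hdata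
    set Φ : {x // x ∈ C'} → ℝ := fun e => cI ⬝ᵥ e.1 + φf e with hΦdef
    have hΦge : ∀ e : {x // x ∈ C'}, z0 ≤ Φ e := by
      intro e
      obtain ⟨x, hxfeas, hxval⟩ := hup e 0 ⟨le_refl 0, (hδpos e).le⟩
      have hmem0 : (e.1, x) ∈ Sreg AI AC b CI CC (ζ + (0:ℝ) • d) :=
        (hmem 0 (e.1, x)).2 ⟨hnatS e.1 (Finset.mem_of_mem_filter _ e.2), hxfeas⟩
      rw [show ζ + (0:ℝ) • d = ζ by simp] at hmem0
      have := hz0min (e.1, x) hmem0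
      simp only [mul_zero, add_zero] at hxval
      simpa [hΦdef, hxval] using this
    rcases C'.eq_empty_or_nonempty with hC'e | hC'ne
    · -- region empty for all small positive t : derivative +∞
      have hempty : ∀ t ∈ Set.Ioc (0:ℝ) 1, Sreg AI AC b CI CC (ζ + t • d) = ∅ := by
        intro t ht
        rw [Set.eq_empty_iff_forall_notMem]
        intro p hp
        rw [hmem t p] at hp
        have hpS : p.1 ∈ S := by
          rw [hSdef, Set.Finite.mem_toFinset]
          exact ⟨p.2, hp.1, hp.2.1, eq_sub_iff_add_eq'.1 hp.2.2.1⟩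
        have : p.1 ∈ C' := Finset.mem_filter.2 ⟨hpS, ⟨t, ht, p.2, hp.2⟩⟩
        rw [hC'e] at this
        exact absurd this (Finset.notMem_empty _)
      refine ⟨⊤, ?_, EReal.zero_lt_top⟩
      have hev : (fun t : ℝ => ((t⁻¹ : ℝ) : EReal) *
          (zRVF cI cC AI AC b CI CC (ζ + t • d) - zRVF cI cC AI AC b CI CC ζ))
          =ᶠ[𝓝[>] (0:ℝ)] (fun _ => (⊤ : EReal)) := by
        filter_upwards [Ioo_mem_nhdsGT zero_lt_one] with t ht
        rw [zRVF_top cI cC AI AC b CI CC _ (hempty t ⟨ht.1, ht.2.le⟩), hz0eq,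
          EReal.top_sub_coe, EReal.coe_mul_top_of_pos (inv_pos.2 ht.1)]
      exact (tendsto_congr' hev).2 tendsto_const_nhds
    · have hTne : C'.attach.Nonempty := Finset.attach_nonempty_iff.2 hC'ne
      set δm : ℝ := C'.attach.inf' hTne δf with hδmdef
      have hδm0 : 0 < δm := by
        rw [hδmdef, Finset.lt_inf'_iff]
        exact fun e _ => hδpos e
      have hδm1 : δm ≤ 1 := by
        obtain ⟨e1, _, heq1⟩ := Finset.exists_mem_eq_inf' hTne δf
        rw [hδmdef, heq1]
        exact hδle1 e1
      -- the exact value of z on the ray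
      have hval : ∀ t : ℝ, 0 < t → t ≤ δm →
          zRVF cI cC AI AC b CI CC (ζ + t • d)
            = ((C'.attach.inf' hTne (fun e => Φ e + sf e * t) : ℝ) : EReal) := by
        intro t ht htδ
        apply le_antisymm
        · obtain ⟨es, hes, heseq⟩ := Finset.exists_mem_eq_inf' hTne (fun e => Φ e + sf e * t)
          have htle : t ≤ δf es := le_trans htδ (Finset.inf'_le δf hes)
          obtain ⟨x, hxfeas, hxval⟩ := hup es t ⟨ht.le, htle⟩
          have hmemt : (es.1, x) ∈ Sreg AI AC b CI CC (ζ + t • d) :=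
            (hmem t (es.1, x)).2 ⟨hnatS es.1 (Finset.mem_of_mem_filter _ es.2), hxfeas⟩
          have : zRVF cI cC AI AC b CI CC (ζ + t • d)
              ≤ ((cI ⬝ᵥ es.1 + cC ⬝ᵥ x : ℝ) : EReal) := sInf_le ⟨(es.1, x), hmemt, rfl⟩
          rw [heseq]
          refine le_trans this ?_
          apply EReal.coe_le_coe_iff.2
          rw [hxval, hΦdef]
          ring_nf
          exact le_refl _
        · apply le_sInf
          rintro y ⟨p, hp, rfl⟩
          have hp' := (hmem t p).1 hp
          have hpS : p.1 ∈ S := by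
            rw [hSdef, Set.Finite.mem_toFinset]
            exact ⟨p.2, hp'.1, hp'.2.1, eq_sub_iff_add_eq'.1 hp'.2.2.1⟩
          have hpC' : p.1 ∈ C' := Finset.mem_filter.2
            ⟨hpS, ⟨t, ⟨ht, le_trans htδ hδm1⟩, p.2, hp'.2⟩⟩
          set e : {x // x ∈ C'} := ⟨p.1, hpC'⟩ with hedef
          have h1 := hlow e t ⟨ht.le, le_trans htδ hδm1⟩ p.2 hp'.2
          have h2 : C'.attach.inf' hTne (fun e => Φ e + sf e * t) ≤ Φ e + sf e * t :=
            Finset.inf'_le _ (Finset.mem_attach _ _)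
          apply EReal.coe_le_coe_iff.2
          rw [hΦdef] at h2
          simp only at h1 h2
          linarith
      -- strictness
      have hstrictmin : ∀ t : ℝ, 0 < t → t ≤ δm →
          z0 < C'.attach.inf' hTne (fun e => Φ e + sf e * t) := by
        intro t ht htδ
        have h1 := z_strict cI cC AI AC b CI CC hbdd ζ hζ hyp d hdle hdne t ht
        rw [hval t ht htδ, hz0eq] at h1
        have h2 := hmono t ht.le
        rw [hval t ht htδ] at h2
        exact lt_of_le_of_ne (EReal.coe_le_coe_iff.1 h2) (fun h => h1 (congrArg _ h.symm))
      set C'' : Finset {x // x ∈ C'} := C'.attach.filter (fun e => Φ e = z0) with hC''def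
      rcases C''.eq_empty_or_nonempty with hC''e | hC''ne
      · -- all intercepts strictly above z0: derivative +∞
        have hΦgt : ∀ e ∈ C'.attach, z0 < Φ e := by
          intro e he
          refine lt_of_le_of_ne (hΦge e) (fun h => ?_)
          have : e ∈ C'' := Finset.mem_filter.2 ⟨he, h.symm⟩
          rw [hC''e] at this
          exact absurd this (Finset.notMem_empty _)
        set a : ℝ := C'.attach.inf' hTne (fun e => Φ e - z0) with hadef
        have ha0 : 0 < a := by
          rw [hadef, Finset.lt_inf'_iff]
          intro e he
          have := hΦgt e he
          linarith
        set sm : ℝ := C'.attach.inf' hTne sf with hsmdef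
        refine ⟨⊤, ?_, EReal.zero_lt_top⟩
        rw [HasDirDeriv, EReal.tendsto_nhds_top_iff_real]
        intro y
        have hr : Tendsto (fun t : ℝ => a * t⁻¹ + sm) (𝓝[>] (0:ℝ)) atTop :=
          tendsto_atTop_add_const_right _ sm (tendsto_inv_nhdsGT_zero.const_mul_atTop ha0)
        filter_upwards [hr.eventually_gt_atTop y, Ioo_mem_nhdsGT
          (lt_min hδm0 zero_lt_one)] with t hty ht
        have ht0 : 0 < t := ht.1
        have htδ : t ≤ δm := le_trans ht.2.le (min_le_left _ _)
        rw [hval t ht0 htδ, hz0eq, ← EReal.coe_sub, ← EReal.coe_mul]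
        apply EReal.coe_lt_coe_iff.2
        have h7 : a + sm * t ≤ C'.attach.inf' hTne (fun e => Φ e + sf e * t) - z0 := by
          rw [le_sub_iff_add_le, Finset.le_inf'_iff]
          intro e he
          have h8 : a ≤ Φ e - z0 := Finset.inf'_le _ he
          have h9 : sm ≤ sf e := Finset.inf'_le _ he
          nlinarith [mul_le_mul_of_nonneg_right h9 ht0.le]
        calc y < a * t⁻¹ + sm := hty
          _ = t⁻¹ * (a + sm * t) := by field_simp
          _ ≤ t⁻¹ * (C'.attach.inf' hTne (fun e => Φ e + sf e * t) - z0) :=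
              mul_le_mul_of_nonneg_left h7 (inv_nonneg.2 ht0.le)
      · -- finite positive derivative
        set L : ℝ := C''.inf' hC''ne sf with hLdef
        obtain ⟨eL, heLmem, heLL⟩ := Finset.exists_mem_eq_inf' hC''ne sf
        have heLattach : eL ∈ C'.attach := Finset.mem_of_mem_filter _ heLmem
        have heLΦ : Φ eL = z0 := (Finset.mem_filter.1 heLmem).2
        have hL0 : 0 < L := by
          by_contra hle0
          push_neg at hle0
          have h1 := hstrictmin δm hδm0 (le_refl δm)
          have h2 : C'.attach.inf' hTne (fun e => Φ e + sf e * δm) ≤ Φ eL + sf eL * δm :=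
            Finset.inf'_le _ heLattach
          rw [heLΦ, ← heLL] at h2
          nlinarith
        set g : {x // x ∈ C'} → ℝ := fun e =>
          if sf e < L ∧ Φ e ≠ z0 then (Φ e - z0) / (L - sf e) else δm with hgdef
        set δ2 : ℝ := C'.attach.inf' hTne g with hδ2def
        have hδ20 : 0 < δ2 := by
          rw [hδ2def, Finset.lt_inf'_iff]
          intro e he
          by_cases hc : sf e < L ∧ Φ e ≠ z0
          · have hge : g e = (Φ e - z0) / (L - sf e) := by
              simp only [hgdef]
              rw [if_pos hc]
            rw [hge]
            have h1 : z0 < Φ e := lt_of_le_of_ne (hΦge e) (Ne.symm hc.2)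
            exact div_pos (by linarith) (by linarith [hc.1])
          · have hge : g e = δm := by
              simp only [hgdef]
              rw [if_neg hc]
            rw [hge]
            exact hδm0
        have hconst : ∀ t : ℝ, 0 < t → t < min δ2 δm →
            C'.attach.inf' hTne (fun e => Φ e + sf e * t) = z0 + L * t := by
          intro t ht1 ht2
          apply le_antisymm
          · have h1 : C'.attach.inf' hTne (fun e => Φ e + sf e * t) ≤ Φ eL + sf eL * t :=
              Finset.inf'_le _ heLattach
            rw [heLΦ, ← heLL] at h1
            exact h1
          · rw [Finset.le_inf'_iff]
            intro e he
            by_cases hΦe : Φ e = z0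
            · have heC'' : e ∈ C'' := Finset.mem_filter.2 ⟨he, hΦe⟩
              have h9 : L ≤ sf e := Finset.inf'_le _ heC''
              rw [hΦe]
              nlinarith [mul_le_mul_of_nonneg_right h9 ht1.le]
            · by_cases hsfe : sf e < L
              · have hge : δ2 ≤ g e := Finset.inf'_le _ he
                have hgeval : g e = (Φ e - z0) / (L - sf e) := by
                  simp only [hgdef]
                  rw [if_pos ⟨hsfe, hΦe⟩]
                have htlt : t < (Φ e - z0) / (L - sf e) := by
                  calc t < min δ2 δm := ht2
                    _ ≤ δ2 := min_le_left _ _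
                    _ ≤ g e := hge
                    _ = _ := hgeval
                have h5 : t * (L - sf e) < Φ e - z0 :=
                  (lt_div_iff₀ (by linarith)).1 htlt
                nlinarith
              · push_neg at hsfe
                have h6 : z0 ≤ Φ e := hΦge e
                nlinarith [mul_le_mul_of_nonneg_right hsfe ht1.le]
        refine ⟨((L : ℝ) : EReal), ?_, EReal.coe_pos.2 hL0⟩
        have hev : (fun t : ℝ => ((t⁻¹ : ℝ) : EReal) *
            (zRVF cI cC AI AC b CI CC (ζ + t • d) - zRVF cI cC AI AC b CI CC ζ))
            =ᶠ[𝓝[>] (0:ℝ)] (fun _ => ((L : ℝ) : EReal)) := by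
          filter_upwards [Ioo_mem_nhdsGT (lt_min hδ20 hδm0)] with t ht
          have ht0 : 0 < t := ht.1
          have htδ : t ≤ δm := le_trans ht.2.le (min_le_right _ _)
          rw [hval t ht0 htδ, hconst t ht0 ht.2, hz0eq, ← EReal.coe_sub, ← EReal.coe_mul]
          congr 1
          field_simp
          ring
        exact (tendsto_congr' hev).2 tendsto_const_nhds
  · -- (ii) → (i)
    intro hder p heff hpval hple
    by_contra hne'
    set d : Fin l → ℝ := (CI.mulVec p.1 + CC.mulVec p.2) - ζ with hddef
    have hdle : d ≤ 0 := by
      intro i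
      simp only [hddef, Pi.sub_apply, Pi.add_apply, Pi.zero_apply]
      have := hple i
      simp only [Pi.add_apply] at this
      linarith
    have hdne : d ≠ 0 := by
      intro h0
      apply hne'
      have := sub_eq_zero.1 h0
      exact this
    obtain ⟨L, hL, hLpos⟩ := hder d hdle hdne
    have hzeq : ∀ t ∈ Set.Ioc (0:ℝ) 1,
        zRVF cI cC AI AC b CI CC (ζ + t • d) = zRVF cI cC AI AC b CI CC ζ := by
      intro t ht
      apply le_antisymm
      · have hp : p ∈ Sreg AI AC b CI CC (ζ + t • d) := by
          refine ⟨heff.1, ?_⟩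
          intro i
          have h1 := hple i
          simp only [Pi.add_apply, Pi.smul_apply, smul_eq_mul, hddef, Pi.sub_apply] at h1 ⊢
          nlinarith [ht.1, ht.2]
        calc zRVF cI cC AI AC b CI CC (ζ + t • d)
            ≤ ((cI ⬝ᵥ p.1 + cC ⬝ᵥ p.2 : ℝ) : EReal) := sInf_le ⟨p, hp, rfl⟩
          _ = zRVF cI cC AI AC b CI CC ζ := hpval
      · apply zRVF_anti
        intro i
        simp only [Pi.add_apply, Pi.smul_apply, smul_eq_mul]
        linarith [mul_nonpos_of_nonneg_of_nonpos ht.1.le (hdle i)]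
    have hev : (fun t : ℝ => ((t⁻¹ : ℝ) : EReal) *
        (zRVF cI cC AI AC b CI CC (ζ + t • d) - zRVF cI cC AI AC b CI CC ζ))
        =ᶠ[𝓝[>] (0:ℝ)] (fun _ => (0 : EReal)) := by
      filter_upwards [Ioo_mem_nhdsGT zero_lt_one] with t ht
      rw [hzeq t ⟨ht.1, ht.2.le⟩, hz0eq, ← EReal.coe_sub, sub_self, ← EReal.coe_mul,
        mul_zero, EReal.coe_zero]
    have h0 : Tendsto (fun t : ℝ => ((t⁻¹ : ℝ) : EReal) *
        (zRVF cI cC AI AC b CI CC (ζ + t • d) - zRVF cI cC AI AC b CI CC ζ))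
        (𝓝[>] (0:ℝ)) (𝓝 (0 : EReal)) := (tendsto_congr' hev).2 tendsto_const_nhds
    have := tendsto_nhds_unique hL h0
    rw [this] at hLpos
    exact lt_irrefl _ hLpos
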